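/- Let μ be a Borel measure on ℝ^n that is F-concave on a class 𝒞 of convex sets, with the property that for every K, L ∈ 𝒞 the mixed measures μ(K;L), μ(K;K) and μ(K;L,L) exist and are finite. If F is twice differentiable at x = μ(K) and F′(μ(K)) ≠ 0, then −(F″(μ(K))/F′(μ(K))) · μ(K;L)² ≥ μ(K;L,L). -/

import Mathlib

open MeasureTheory Set Filter Topology Pointwise

noncomputable section

/-- The mixed measure `μ(K;L) = lim_{ε→0⁺} (μ(K+εL) − μ(K))/ε` exists and equals `m`. -/
def HasMixedMeasure {n : ℕ} (μ : Measure (EuclideanSpace ℝ (Fin n)))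
    (K L : Set (EuclideanSpace ℝ (Fin n))) (m : ℝ) : Prop :=
  Tendsto (fun ε : ℝ => ((μ (K + ε • L)).toReal - (μ K).toReal) / ε) (𝓝[>] 0) (𝓝 m)

/-- The mixed measure `μ(K;L,L) = d²/ds² μ(K+sL)` at `s = 0` (one-sided) exists and
equals `m`: there is a first (one-sided) derivative function `g` of `s ↦ μ(K+sL)` on
`[0,∞)` whose (one-sided) derivative at `0` is `m`. -/
def HasMixedMeasureSecond {n : ℕ} (μ : Measure (EuclideanSpace ℝ (Fin n)))
    (K L : Set (EuclideanSpace ℝ (Fin n))) (m : ℝ) : Prop :=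
  ∃ g : ℝ → ℝ,
    (∀ s ∈ Ici (0:ℝ),
      HasDerivWithinAt (fun u : ℝ => (μ (K + u • L)).toReal) (g s) (Ici 0) s) ∧
    HasDerivWithinAt g m (Ici 0) 0

/-- A class of sets: closed under Minkowski sums and nonnegative dilations. -/
def IsMinkowskiClass {n : ℕ} (𝒞 : Set (Set (EuclideanSpace ℝ (Fin n)))) : Prop :=
  ∀ K ∈ 𝒞, ∀ L ∈ 𝒞, ∀ s t : ℝ, 0 ≤ s → 0 ≤ t → s • K + t • L ∈ 𝒞

/-- `μ` is `F`-concave on the class `𝒞`. -/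
def IsFConcave {n : ℕ} (μ : Measure (EuclideanSpace ℝ (Fin n))) (F : ℝ → ℝ)
    (𝒞 : Set (Set (EuclideanSpace ℝ (Fin n)))) : Prop :=
  ContinuousOn F {x : ℝ | 0 < x ∧ ENNReal.ofReal x ≤ μ univ} ∧
  (StrictMonoOn F {x : ℝ | 0 < x ∧ ENNReal.ofReal x ≤ μ univ} ∨
    StrictAntiOn F {x : ℝ | 0 < x ∧ ENNReal.ofReal x ≤ μ univ}) ∧
  (∀ K ∈ 𝒞, ∀ L ∈ 𝒞, ∀ t ∈ Icc (0:ℝ) 1, 0 < μ K → 0 < μ L → μ K ≠ ⊤ → μ L ≠ ⊤ →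
    ∀ y : ℝ, 0 < y → ENNReal.ofReal y ≤ μ univ →
      F y = (1 - t) * F (μ K).toReal + t * F (μ L).toReal →
      y ≤ (μ ((1 - t) • K + t • L)).toReal)

section Aux

variable {n : ℕ}

private lemma Ici_zero_diff : Ici (0:ℝ) \ {0} = Ioi 0 := by
  ext x
  simp only [mem_diff, mem_Ici, mem_singleton_iff, mem_Ioi]
  exact ⟨fun ⟨h1, h2⟩ => lt_of_le_of_ne h1 (Ne.symm h2), fun h => ⟨h.le, h.ne'⟩⟩

/-- Main auxiliary lemma: the theorem assuming `F` is strictly monotone (increasing)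
on the relevant domain. -/
private lemma aux_main
    (μ : Measure (EuclideanSpace ℝ (Fin n))) (F : ℝ → ℝ)
    (𝒞 : Set (Set (EuclideanSpace ℝ (Fin n))))
    (hconv : ∀ A ∈ 𝒞, Convex ℝ A)
    (hclass : IsMinkowskiClass 𝒞)
    (hcont : ContinuousOn F {x : ℝ | 0 < x ∧ ENNReal.ofReal x ≤ μ univ})
    (hmono : StrictMonoOn F {x : ℝ | 0 < x ∧ ENNReal.ofReal x ≤ μ univ})
    (hconc : ∀ K ∈ 𝒞, ∀ L ∈ 𝒞, ∀ t ∈ Icc (0:ℝ) 1, 0 < μ K → 0 < μ L → μ K ≠ ⊤ → μ L ≠ ⊤ →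
      ∀ y : ℝ, 0 < y → ENNReal.ofReal y ≤ μ univ →
        F y = (1 - t) * F (μ K).toReal + t * F (μ L).toReal →
        y ≤ (μ ((1 - t) • K + t • L)).toReal)
    (K L : Set (EuclideanSpace ℝ (Fin n))) (hK : K ∈ 𝒞) (hL : L ∈ 𝒞)
    (mKL mKLL : ℝ)
    (hKL : HasMixedMeasure μ K L mKL) (hKLL : HasMixedMeasureSecond μ K L mKLL)
    (F' : ℝ → ℝ) (F'' : ℝ)
    (hF' : ∀ᶠ x in 𝓝 (μ K).toReal, HasDerivAt F (F' x) x)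
    (hF'' : HasDerivAt F' F'' (μ K).toReal)
    (hF'ne : F' (μ K).toReal ≠ 0) :
    mKLL ≤ -(F'' / F' (μ K).toReal) * mKL ^ 2 := by
  classical
  set D := {x : ℝ | 0 < x ∧ ENNReal.ofReal x ≤ μ univ} with hD
  set f : ℝ → ℝ := fun s => (μ (K + s • L)).toReal with hf
  obtain ⟨g, hg, hg2⟩ := hKLL
  -- dispose of the case `L = ∅`
  rcases eq_empty_or_nonempty L with hLe | hLne
  · have hfz : f = fun _ => (0:ℝ) := by
      funext s
      simp [hf, hLe]
    have hgz : ∀ s ∈ Ici (0:ℝ), g s = 0 := by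
      intro s hs
      have h1 : HasDerivWithinAt f (g s) (Ici 0) s := hg s hs
      rw [hfz] at h1
      have h2 : HasDerivWithinAt (fun _ : ℝ => (0:ℝ)) 0 (Ici 0) s := hasDerivWithinAt_const _ _ 0
      exact (h1.derivWithin (uniqueDiffOn_Ici 0 s hs)).symm.trans
        (h2.derivWithin (uniqueDiffOn_Ici 0 s hs))
    have hmKLL : mKLL = 0 := by
      have h1 : HasDerivWithinAt (fun _ : ℝ => (0:ℝ)) mKLL (Ici 0) 0 :=
        hg2.congr (fun y hy => (hgz y hy).symm) (hgz 0 self_mem_Ici).symm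
      have h2 : HasDerivWithinAt (fun _ : ℝ => (0:ℝ)) 0 (Ici 0) 0 := hasDerivWithinAt_const _ _ 0
      exact (h1.derivWithin (uniqueDiffOn_Ici 0 0 self_mem_Ici)).symm.trans
        (h2.derivWithin (uniqueDiffOn_Ici 0 0 self_mem_Ici))
    have hμK0 : (μ K).toReal = 0 := by
      have hid : Tendsto (fun ε : ℝ => ε) (𝓝[>] (0:ℝ)) (𝓝 0) :=
        tendsto_id.mono_left nhdsWithin_le_nhds
      have h1 : Tendsto (fun ε : ℝ => ((μ (K + ε • L)).toReal - (μ K).toReal) / ε * ε)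
          (𝓝[>] (0:ℝ)) (𝓝 (mKL * 0)) := hKL.mul hid
      have h2 : Tendsto (fun _ : ℝ => -(μ K).toReal) (𝓝[>] (0:ℝ)) (𝓝 (mKL * 0)) := by
        apply h1.congr'
        filter_upwards [self_mem_nhdsWithin] with ε hε
        have hε0 : (ε:ℝ) ≠ 0 := ne_of_gt hε
        have : (μ (K + ε • L)).toReal = 0 := by simp [hLe]
        rw [this]
        field_simp
        ring
      have := tendsto_nhds_unique h2 tendsto_const_nhds
      linarith [ENNReal.toReal_nonneg (a := μ K), this.symm ▸ le_refl (mKL * 0)]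
    have hmKL : mKL = 0 := by
      have h1 : Tendsto (fun _ : ℝ => (0:ℝ)) (𝓝[>] (0:ℝ)) (𝓝 mKL) := by
        apply hKL.congr'
        filter_upwards [self_mem_nhdsWithin] with ε hε
        have : (μ (K + ε • L)).toReal = 0 := by simp [hLe]
        rw [this, hμK0]
        simp
      exact tendsto_nhds_unique h1 tendsto_const_nhds
    rw [hmKL, hmKLL]
    simp
  -- now `L` is nonempty
  have hf0 : f 0 = (μ K).toReal := by
    rw [hf]
    simp only [zero_smul_set hLne, add_zero]
  rw [← hf0] at hF' hF'' hF'ne ⊢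
  -- the first derivative at `0` is `mKL`
  have hslope0 : Tendsto (slope f 0) (𝓝[>] (0:ℝ)) (𝓝 (g 0)) := by
    have h2 := hasDerivWithinAt_iff_tendsto_slope.mp (hg 0 self_mem_Ici)
    rwa [Ici_zero_diff] at h2
  have hslope0' : Tendsto (slope f 0) (𝓝[>] (0:ℝ)) (𝓝 mKL) := by
    apply hKL.congr
    intro ε
    rw [slope_def_field, hf0]
    simp [div_eq_div_iff]
    rfl
  have hg0 : g 0 = mKL := tendsto_nhds_unique hslope0 hslope0'
  by_cases hdeg : ∀ δ > (0:ℝ), ∃ s ∈ Ioc (0:ℝ) δ, f s = 0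
  · -- degenerate case: zeros of `f` accumulate at `0⁺`
    have hfreq : ∃ᶠ s in 𝓝[>] (0:ℝ), 0 < s ∧ f s = 0 := by
      rw [frequently_iff]
      intro U hU
      obtain ⟨u, hu, hsub⟩ := mem_nhdsGT_iff_exists_Ioo_subset.mp hU
      obtain ⟨s, hs, hfs⟩ := hdeg (u / 2) (by simpa using hu)
      have hsu : s < u := lt_of_le_of_lt hs.2 (by linarith [mem_Ioi.mp hu])
      exact ⟨s, hsub ⟨hs.1, hsu⟩, hs.1, hfs⟩
    have hf00 : f 0 = 0 := by
      have hcf : ContinuousWithinAt f (Ici 0) 0 := (hg 0 self_mem_Ici).continuousWithinAt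
      have h1 : Tendsto f (𝓝[>] (0:ℝ)) (𝓝 (f 0)) :=
        hcf.tendsto.mono_left (nhdsWithin_mono _ Ioi_subset_Ici_self)
      exact tendsto_nhds_unique_of_frequently_eq h1 tendsto_const_nhds
        (hfreq.mono fun s hs => hs.2)
    have hmKL : mKL = 0 := by
      refine tendsto_nhds_unique_of_frequently_eq hslope0' tendsto_const_nhds ?_
      exact hfreq.mono fun s hs => by rw [slope_def_field, hs.2, hf00]; simp
    have hgz : ∀ s : ℝ, 0 < s → f s = 0 → g s = 0 := by
      intro s hs hfs
      have hd : HasDerivAt f (g s) s := (hg s hs.le).hasDerivAt (Ici_mem_nhds hs)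
      have hmin : IsLocalMin f s := Filter.Eventually.of_forall fun x => by
        rw [hfs]; exact ENNReal.toReal_nonneg
      rw [← hd.deriv]; exact hmin.deriv_eq_zero
    have hslopeg : Tendsto (slope g 0) (𝓝[>] (0:ℝ)) (𝓝 mKLL) := by
      have h2 := hasDerivWithinAt_iff_tendsto_slope.mp hg2
      rwa [Ici_zero_diff] at h2
    have hmKLL : mKLL = 0 := by
      refine tendsto_nhds_unique_of_frequently_eq hslopeg tendsto_const_nhds ?_
      refine hfreq.mono fun s hs => ?_
      rw [slope_def_field, hgz s hs.1 hs.2, hg0, hmKL]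
      simp
    rw [hmKL, hmKLL]
    simp
  · push_neg at hdeg
    obtain ⟨δ, hδ, hne⟩ := hdeg
    have hpos : ∀ s ∈ Ioc (0:ℝ) δ, 0 < f s := fun s hs =>
      lt_of_le_of_ne ENNReal.toReal_nonneg (Ne.symm (hne s hs))
    have hμfin : ∀ s ∈ Ioc (0:ℝ) δ, 0 < μ (K + s • L) ∧ μ (K + s • L) < ⊤ := fun s hs =>
      ENNReal.toReal_pos_iff.mp (hpos s hs)
    have hmem : ∀ s : ℝ, 0 ≤ s → K + s • L ∈ 𝒞 := by
      intro s hs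
      have := hclass K hK L hL 1 s zero_le_one hs
      rwa [one_smul] at this
    have halg : ∀ θ s t : ℝ, 0 ≤ θ → θ ≤ 1 → 0 ≤ s → 0 ≤ t →
        (1 - θ) • (K + s • L) + θ • (K + t • L) = K + ((1 - θ) * s + θ * t) • L := by
      intro θ s t h0 h1 hs ht
      rw [smul_add, smul_add, smul_smul, smul_smul, add_add_add_comm,
        ← Convex.add_smul (hconv K hK) (by linarith) h0, sub_add_cancel, one_smul,
        ← Convex.add_smul (hconv L hL) (mul_nonneg (by linarith) hs) (mul_nonneg h0 ht)]
    have key : ∀ s u t : ℝ, 0 < s → s < u → u < t → t ≤ δ →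
        F (f s) * (t - u) + F (f t) * (u - s) ≤ F (f u) * (t - s) := by
      intro s u t hs hsu hut htδ
      have hts : (0:ℝ) < t - s := by linarith
      set θ := (u - s) / (t - s) with hθdef
      have hθ0 : 0 ≤ θ := div_nonneg (by linarith) hts.le
      have hθ1 : θ ≤ 1 := by rw [hθdef, div_le_one hts]; linarith
      have hcomb : (1 - θ) * s + θ * t = u := by
        rw [hθdef]; field_simp; ring
      have hfs := hpos s ⟨hs, by linarith⟩
      have hft := hpos t ⟨by linarith, htδ⟩
      obtain ⟨hμs, hμs'⟩ := hμfin s ⟨hs, by linarith⟩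
      obtain ⟨hμt, hμt'⟩ := hμfin t ⟨by linarith, htδ⟩
      have hDsub : uIcc (f s) (f t) ⊆ D := by
        intro x hx
        refine ⟨lt_of_lt_of_le (lt_min hfs hft) hx.1, ?_⟩
        rcases le_max_iff.mp hx.2 with h | h
        · calc ENNReal.ofReal x ≤ ENNReal.ofReal (f s) := ENNReal.ofReal_le_ofReal h
            _ = μ (K + s • L) := ENNReal.ofReal_toReal hμs'.ne
            _ ≤ μ univ := measure_mono (subset_univ _)
        · calc ENNReal.ofReal x ≤ ENNReal.ofReal (f t) := ENNReal.ofReal_le_ofReal h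
            _ = μ (K + t • L) := ENNReal.ofReal_toReal hμt'.ne
            _ ≤ μ univ := measure_mono (subset_univ _)
      have hmemv : (1 - θ) * F (f s) + θ * F (f t) ∈ uIcc (F (f s)) (F (f t)) := by
        rcases le_total (F (f s)) (F (f t)) with h | h
        · rw [uIcc_of_le h]; constructor <;> nlinarith
        · rw [uIcc_of_ge h]; constructor <;> nlinarith
      obtain ⟨y, hy_mem, hFy⟩ := intermediate_value_uIcc (hcont.mono hDsub) hmemv
      have hy0 : 0 < y := (hDsub hy_mem).1
      have hyle : y ≤ (μ ((1 - θ) • (K + s • L) + θ • (K + t • L))).toReal :=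
        hconc _ (hmem s hs.le) _ (hmem t (by linarith)) θ ⟨hθ0, hθ1⟩ hμs hμt hμs'.ne hμt'.ne
          y hy0 (hDsub hy_mem).2 hFy
      rw [halg θ s t hθ0 hθ1 hs.le (by linarith), hcomb] at hyle
      have hfu : 0 < f u := lt_of_lt_of_le hy0 hyle
      have hfuD : f u ∈ D := by
        refine ⟨hfu, ?_⟩
        rw [ENNReal.ofReal_toReal (ENNReal.toReal_pos_iff.mp hfu).2.ne]
        exact measure_mono (subset_univ _)
      have hmle : F y ≤ F (f u) := hmono.monotoneOn (hDsub hy_mem) hfuD hyle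
      rw [hFy] at hmle
      have h2 := mul_le_mul_of_nonneg_right hmle hts.le
      have h3 : ((1 - θ) * F (f s) + θ * F (f t)) * (t - s)
          = F (f s) * (t - u) + F (f t) * (u - s) := by
        rw [hθdef]; field_simp; ring
      rw [h3] at h2
      exact h2
    obtain ⟨ε₁, hε₁, hball⟩ := Metric.eventually_nhds_iff.mp hF'
    obtain ⟨δ₂, hδ₂, hδ₂'⟩ := Metric.continuousWithinAt_iff.mp
      ((hg 0 self_mem_Ici).continuousWithinAt) ε₁ hε₁
    set δ' := min δ (δ₂ / 2) with hδ'def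
    have hδ'pos : 0 < δ' := lt_min hδ (by linarith)
    have hδ'δ : δ' ≤ δ := min_le_left _ _
    have hFd : ∀ s ∈ Ioc (0:ℝ) δ', HasDerivAt F (F' (f s)) (f s) := by
      intro s hs
      apply hball
      apply hδ₂' (show s ∈ Ici (0:ℝ) from hs.1.le)
      rw [Real.dist_eq, sub_zero, abs_of_pos hs.1]
      have h4 : s ≤ δ₂ / 2 := le_trans hs.2 (min_le_right _ _)
      linarith
    set G : ℝ → ℝ := fun s => F' (f s) * g s with hG
    have hderivh : ∀ s ∈ Ioc (0:ℝ) δ', HasDerivWithinAt (fun u => F (f u)) (G s) (Ici 0) s :=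
      fun s hs => (hFd s hs).comp_hasDerivWithinAt s (hg s hs.1.le)
    have hGanti : ∀ s t : ℝ, s ∈ Ioc (0:ℝ) δ' → t ∈ Ioc (0:ℝ) δ' → s < t → G t ≤ G s := by
      intro s t hs ht hst
      have hts : (0:ℝ) < t - s := by linarith
      have hsub : Ioo s t ⊆ Ici 0 \ {s} := fun x hx =>
        ⟨le_of_lt (lt_trans hs.1 hx.1), ne_of_gt hx.1⟩
      have hsub' : Ioo s t ⊆ Ici 0 \ {t} := fun x hx =>
        ⟨le_of_lt (lt_trans hs.1 hx.1), ne_of_lt hx.2⟩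
      have h1 : Tendsto (slope (fun u => F (f u)) s) (𝓝[Ioo s t] s) (𝓝 (G s)) :=
        (hasDerivWithinAt_iff_tendsto_slope.mp (hderivh s hs)).mono_left
          (nhdsWithin_mono _ hsub)
      have h2 : Tendsto (slope (fun u => F (f u)) t) (𝓝[Ioo s t] t) (𝓝 (G t)) :=
        (hasDerivWithinAt_iff_tendsto_slope.mp (hderivh t ht)).mono_left
          (nhdsWithin_mono _ hsub')
      haveI : (𝓝[Ioo s t] s).NeBot := by
        rw [nhdsWithin_Ioo_eq_nhdsGT hst]; infer_instance
      haveI : (𝓝[Ioo s t] t).NeBot := by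
        rw [nhdsWithin_Ioo_eq_nhdsLT hst]; infer_instance
      have hc1 : (F (f t) - F (f s)) / (t - s) ≤ G s := by
        refine ge_of_tendsto h1 ?_
        filter_upwards [self_mem_nhdsWithin] with u hu
        rw [slope_def_field, div_le_div_iff₀ hts (by linarith [hu.1] : (0:ℝ) < u - s)]
        nlinarith [key s u t hs.1 hu.1 hu.2 (le_trans ht.2 hδ'δ)]
      have hc2 : G t ≤ (F (f t) - F (f s)) / (t - s) := by
        refine le_of_tendsto h2 ?_
        filter_upwards [self_mem_nhdsWithin] with u hu
        rw [slope_def_field,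
          show F (f u) - F (f t) = -(F (f t) - F (f u)) by ring,
          show u - t = -(t - u) by ring, neg_div_neg_eq,
          div_le_div_iff₀ (by linarith [hu.2] : (0:ℝ) < t - u) hts]
        nlinarith [key s u t hs.1 hu.1 hu.2 (le_trans ht.2 hδ'δ)]
      linarith
    have hGcont : ContinuousWithinAt G (Ici 0) 0 := by
      have h1 : ContinuousWithinAt f (Ici 0) 0 := (hg 0 self_mem_Ici).continuousWithinAt
      have h3 : ContinuousAt F' (f 0) := hF''.continuousAt
      exact (h3.comp_continuousWithinAt h1).mul hg2.continuousWithinAt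
    have hGle : ∀ s ∈ Ioc (0:ℝ) δ', G s ≤ G 0 := by
      intro s hs
      have htend : Tendsto G (𝓝[>] (0:ℝ)) (𝓝 (G 0)) :=
        hGcont.tendsto.mono_left (nhdsWithin_mono _ Ioi_subset_Ici_self)
      refine ge_of_tendsto htend ?_
      filter_upwards [self_mem_nhdsWithin,
        mem_nhdsWithin_of_mem_nhds (Iio_mem_nhds hs.1)] with u hu1 hu2
      exact hGanti u s ⟨hu1, le_trans hu2.le hs.2⟩ hs hu2
    have hGderiv : HasDerivWithinAt G (F'' * g 0 * g 0 + F' (f 0) * mKLL) (Ici 0) 0 :=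
      (hF''.comp_hasDerivWithinAt 0 (hg 0 self_mem_Ici)).mul hg2
    have hcle : F'' * g 0 * g 0 + F' (f 0) * mKLL ≤ 0 := by
      have hslopeG : Tendsto (slope G 0) (𝓝[>] (0:ℝ))
          (𝓝 (F'' * g 0 * g 0 + F' (f 0) * mKLL)) := by
        have h2 := hasDerivWithinAt_iff_tendsto_slope.mp hGderiv
        rwa [Ici_zero_diff] at h2
      refine le_of_tendsto hslopeG ?_
      filter_upwards [self_mem_nhdsWithin,
        mem_nhdsWithin_of_mem_nhds (Iio_mem_nhds hδ'pos)] with u hu1 hu2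
      rw [slope_def_field, sub_zero]
      exact div_nonpos_iff.mpr (Or.inr ⟨by linarith [hGle u ⟨hu1, hu2.le⟩], hu1.le⟩)
    set q : ℝ := max (f 0) (f δ') with hq
    have hfδ' : 0 < f δ' := hpos δ' ⟨hδ'pos, hδ'δ⟩
    have hqD : Ioc (0:ℝ) q ⊆ D := by
      intro x hx
      refine ⟨hx.1, ?_⟩
      rcases le_max_iff.mp hx.2 with h | h
      · have hf0pos : 0 < f 0 := lt_of_lt_of_le hx.1 h
        calc ENNReal.ofReal x ≤ ENNReal.ofReal (f 0) := ENNReal.ofReal_le_ofReal h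
          _ = μ (K + (0:ℝ) • L) := ENNReal.ofReal_toReal (ENNReal.toReal_pos_iff.mp hf0pos).2.ne
          _ ≤ μ univ := measure_mono (subset_univ _)
      · calc ENNReal.ofReal x ≤ ENNReal.ofReal (f δ') := ENNReal.ofReal_le_ofReal h
          _ = μ (K + δ' • L) := ENNReal.ofReal_toReal (ENNReal.toReal_pos_iff.mp hfδ').2.ne
          _ ≤ μ univ := measure_mono (subset_univ _)
    have hFat0 : HasDerivAt F (F' (f 0)) (f 0) := hF'.self_of_nhds
    have hqpos : (0:ℝ) < q := lt_of_lt_of_le hfδ' (le_max_right _ _)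
    have hF'pos : 0 < F' (f 0) := by
      have hf0nn : (0:ℝ) ≤ f 0 := ENNReal.toReal_nonneg
      rcases eq_or_lt_of_le hf0nn with h0 | h0
      · have hFcont : Tendsto F (𝓝[>] (0:ℝ)) (𝓝 (F 0)) := by
          have h5 := hFat0.continuousAt
          rw [← h0] at h5
          exact h5.continuousWithinAt.tendsto
        have hFle : ∀ x ∈ Ioc (0:ℝ) q, F 0 ≤ F x := by
          intro x hx
          refine le_of_tendsto hFcont ?_
          filter_upwards [self_mem_nhdsWithin,
            mem_nhdsWithin_of_mem_nhds (Iio_mem_nhds hx.1)] with v hv1 hv2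
          exact hmono.monotoneOn (hqD ⟨hv1, le_trans hv2.le hx.2⟩) (hqD hx) hv2.le
        have hslopeF : Tendsto (slope F (f 0)) (𝓝[>] (0:ℝ)) (𝓝 (F' (f 0))) := by
          have h2 := hasDerivAt_iff_tendsto_slope.mp hFat0
          rw [← h0] at h2 ⊢
          exact h2.mono_left (nhdsWithin_mono _ fun x hx => ne_of_gt hx)
        have h6 : 0 ≤ F' (f 0) := by
          refine ge_of_tendsto hslopeF ?_
          filter_upwards [self_mem_nhdsWithin,
            mem_nhdsWithin_of_mem_nhds (Iio_mem_nhds hqpos)] with x hx1 hx2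
          rw [← h0, slope_def_field, sub_zero]
          exact div_nonneg (by linarith [hFle x ⟨hx1, hx2.le⟩]) hx1.le
        exact lt_of_le_of_ne h6 (Ne.symm hF'ne)
      · have hf0q : f 0 ∈ Ioc (0:ℝ) q := ⟨h0, le_max_left _ _⟩
        have hslopeF : Tendsto (slope F (f 0)) (𝓝[<] (f 0)) (𝓝 (F' (f 0))) :=
          (hasDerivAt_iff_tendsto_slope.mp hFat0).mono_left
            (nhdsWithin_mono _ fun x hx => ne_of_lt hx)
        have h6 : 0 ≤ F' (f 0) := by
          refine ge_of_tendsto hslopeF ?_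
          filter_upwards [self_mem_nhdsWithin,
            mem_nhdsWithin_of_mem_nhds (Ioi_mem_nhds h0)] with x hx1 hx2
          rw [slope_def_field]
          refine div_nonneg_iff.mpr (Or.inr ⟨?_, by linarith [mem_Iio.mp hx1]⟩)
          have := hmono.monotoneOn (hqD ⟨hx2, le_trans hx1.le (le_max_left _ _)⟩)
            (hqD hf0q) hx1.le
          linarith
        exact lt_of_le_of_ne h6 (Ne.symm hF'ne)
    rw [hg0] at hcle
    have hdiv : mKLL ≤ -(F'' * mKL ^ 2) / F' (f 0) := by
      rw [le_div_iff₀ hF'pos]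
      nlinarith [hcle]
    calc mKLL ≤ -(F'' * mKL ^ 2) / F' (f 0) := hdiv
      _ = -(F'' / F' (f 0)) * mKL ^ 2 := by ring

end Aux

/-- Minkowski's second inequality for `F`-concave measures:
`−(F″(μ(K))/F′(μ(K)))·μ(K;L)² ≥ μ(K;L,L)`. -/
theorem minkowski_second_for_F_concave_measures {n : ℕ}
    (μ : Measure (EuclideanSpace ℝ (Fin n))) (F : ℝ → ℝ)
    (𝒞 : Set (Set (EuclideanSpace ℝ (Fin n))))
    (hconv : ∀ A ∈ 𝒞, Convex ℝ A)
    (hclass : IsMinkowskiClass 𝒞)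
    (hF : IsFConcave μ F 𝒞)
    (hex : ∀ K ∈ 𝒞, ∀ L ∈ 𝒞,
      (∃ m, HasMixedMeasure μ K L m) ∧ (∃ m, HasMixedMeasure μ K K m) ∧
      (∃ m, HasMixedMeasureSecond μ K L m))
    (K L : Set (EuclideanSpace ℝ (Fin n))) (hK : K ∈ 𝒞) (hL : L ∈ 𝒞)
    (hKfin : μ K ≠ ⊤)
    (mKL mKLL : ℝ)
    (hKL : HasMixedMeasure μ K L mKL) (hKLL : HasMixedMeasureSecond μ K L mKLL)
    (F' : ℝ → ℝ) (F'' : ℝ)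
    (hF' : ∀ᶠ x in 𝓝 (μ K).toReal, HasDerivAt F (F' x) x)
    (hF'' : HasDerivAt F' F'' (μ K).toReal)
    (hF'ne : F' (μ K).toReal ≠ 0) :
    mKLL ≤ -(F'' / F' (μ K).toReal) * mKL ^ 2 := by
  obtain ⟨hcont, hmonoanti, hconc⟩ := hF
  rcases hmonoanti with hmono | hanti
  · exact aux_main μ F 𝒞 hconv hclass hcont hmono hconc K L hK hL mKL mKLL hKL hKLL F' F''
      hF' hF'' hF'ne
  · have hmono' : StrictMonoOn (fun x => -F x) {x : ℝ | 0 < x ∧ ENNReal.ofReal x ≤ μ univ} :=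
      fun a ha b hb hab => neg_lt_neg (hanti ha hb hab)
    have hconc' : ∀ K ∈ 𝒞, ∀ L ∈ 𝒞, ∀ t ∈ Icc (0:ℝ) 1, 0 < μ K → 0 < μ L → μ K ≠ ⊤ → μ L ≠ ⊤ →
        ∀ y : ℝ, 0 < y → ENNReal.ofReal y ≤ μ univ →
          (fun x => -F x) y = (1 - t) * (fun x => -F x) (μ K).toReal
            + t * (fun x => -F x) (μ L).toReal →
          y ≤ (μ ((1 - t) • K + t • L)).toReal := by
      intro A hA B hB t ht hμA hμB hA' hB' y hy hy' heq
      refine hconc A hA B hB t ht hμA hμB hA' hB' y hy hy' ?_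
      simp only at heq
      linarith
    have := aux_main μ (fun x => -F x) 𝒞 hconv hclass hcont.neg hmono' hconc' K L hK hL
      mKL mKLL hKL hKLL (fun x => -F' x) (-F'')
      (hF'.mono fun x hx => hx.neg) hF''.neg (neg_ne_zero.mpr hF'ne)
    simpa [neg_div_neg_eq] using this
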